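/- Define rational functions Ψ₀(s) = (4 − 9/(s+1) + 5/(s+1)² + (−3 + 5/(s+1))·(1/(5s+2)))·(1 − 3/(s+1) + 3/(s+1)²), Ψ₁(s) = (1/(7s+3))·(4 − 13/(s+1) + 11/(s+1)² + (−3 + 5/(s+1))·(1/(5s+2)))·(−1 + 3/(s+1)), and Ψ₂(s) = (1/(4s+3))·(1 − 4/(s+1) + 6/(s+1)²)·(−4 + 6/(s+1)). Then all three are defined at s = −1/2, with Ψ₀(−1/2) = −56, Ψ₁(−1/2) = −80, Ψ₂(−1/2) = 136, so that Ψ₀(−1/2) + Ψ₁(−1/2) + Ψ₂(−1/2) = 0; consequently the rational function Z(s) = (Ψ₀(s) + Ψ₁(s) + Ψ₂(s))/(10s+5) has no pole at s = −1/2. (Example A.2 of the Appendix: for the reduced arrangement f = (x−y)(x−2y)(x−3y)(x−4y)(x−5y)(x+y+z)zuv(u+v+z) in ℂ⁵, with n = 5 and d = 10, the candidate pole −n/d = −1/2 of the topological local zeta function cancels.) -/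

import Mathlib

open Polynomial

/-- The order of a rational function `Z ∈ ℚ(s)` at a point `α ∈ ℚ`: the integer `k`
such that `Z = (s-α)^k · (u/v)` with `u`, `v` not vanishing at `α`. -/
noncomputable def orderAt (Z : RatFunc ℚ) (α : ℚ) : ℤ :=
  (rootMultiplicity α Z.num : ℤ) - (rootMultiplicity α Z.denom : ℤ)

local notation "X" => (RatFunc.X : RatFunc ℚ)

private theorem ratfunc_key (Z : RatFunc ℚ) (p q : ℚ[X]) (α : ℚ) (hq : q.eval α ≠ 0)
    (h : Z = algebraMap ℚ[X] (RatFunc ℚ) p / algebraMap ℚ[X] (RatFunc ℚ) q) :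
    Z.denom.eval α ≠ 0 ∧ RatFunc.eval (RingHom.id ℚ) α Z = p.eval α / q.eval α := by
  have hq0 : q ≠ 0 := fun h0 => hq (by simp [h0])
  have hdvd : Z.denom ∣ q := (RatFunc.denom_dvd hq0).mpr ⟨p, h⟩
  obtain ⟨r, hr⟩ := hdvd
  have hden : Z.denom.eval α ≠ 0 := by
    intro h0
    apply hq
    rw [hr, Polynomial.eval_mul, h0, zero_mul]
  refine ⟨hden, ?_⟩
  have hcross : p * Z.denom = Z.num * q := by
    have hinj := RatFunc.algebraMap_injective ℚ
    apply hinj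
    have hz := Z.num_div_denom
    have hdne : algebraMap ℚ[X] (RatFunc ℚ) Z.denom ≠ 0 :=
      RatFunc.algebraMap_ne_zero Z.denom_ne_zero
    have hqne : algebraMap ℚ[X] (RatFunc ℚ) q ≠ 0 := RatFunc.algebraMap_ne_zero hq0
    have h2 := h.symm
    rw [← hz, div_eq_div_iff hqne hdne] at h2
    rw [map_mul, map_mul]
    linear_combination h2
  have hev := congrArg (Polynomial.eval α) hcross
  simp only [Polynomial.eval_mul] at hev
  have hid : ∀ r : ℚ[X], Polynomial.eval₂ (RingHom.id ℚ) α r = r.eval α := fun r => rfl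
  rw [RatFunc.eval, hid, hid, div_eq_div_iff hden hq]
  linear_combination hev.symm

private theorem map_div_add_div (a b c d : ℚ[X]) (hb : b ≠ 0) (hd : d ≠ 0) :
    algebraMap ℚ[X] (RatFunc ℚ) a / algebraMap ℚ[X] (RatFunc ℚ) b +
      algebraMap ℚ[X] (RatFunc ℚ) c / algebraMap ℚ[X] (RatFunc ℚ) d =
    algebraMap ℚ[X] (RatFunc ℚ) (a * d + b * c) / algebraMap ℚ[X] (RatFunc ℚ) (b * d) := by
  rw [div_add_div _ _ (RatFunc.algebraMap_ne_zero hb) (RatFunc.algebraMap_ne_zero hd),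
    ← map_mul, ← map_mul, ← map_mul, ← map_add]

private theorem map_div_div (a b c : ℚ[X]) :
    algebraMap ℚ[X] (RatFunc ℚ) a / algebraMap ℚ[X] (RatFunc ℚ) b /
      algebraMap ℚ[X] (RatFunc ℚ) c =
    algebraMap ℚ[X] (RatFunc ℚ) a / algebraMap ℚ[X] (RatFunc ℚ) (b * c) := by
  rw [div_div, ← map_mul]

set_option maxHeartbeats 2000000 in
/-- Example A.2 of the Appendix (for the reduced arrangement
`f = (x-y)(x-2y)(x-3y)(x-4y)(x-5y)(x+y+z)zuv(u+v+z)` in `ℂ⁵`, `n = 5`, `d = 10`):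
the rational functions `Ψ₀, Ψ₁, Ψ₂` are defined at `s = -1/2` with values `-56`, `-80`, `136`
(summing to `0`), hence `Z(s) = (Ψ₀(s)+Ψ₁(s)+Ψ₂(s))/(10s+5)` has no pole at `s = -1/2`,
i.e. the candidate pole `-n/d = -1/2` cancels. -/
theorem statement15 (Ψ₀ Ψ₁ Ψ₂ Z : RatFunc ℚ)
    (hΨ₀ : Ψ₀ = (4 - 9 / (X + 1) + 5 / (X + 1) ^ 2 + (-3 + 5 / (X + 1)) * (1 / (5 * X + 2)))
      * (1 - 3 / (X + 1) + 3 / (X + 1) ^ 2))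
    (hΨ₁ : Ψ₁ = (1 / (7 * X + 3)) *
      ((4 - 13 / (X + 1) + 11 / (X + 1) ^ 2 + (-3 + 5 / (X + 1)) * (1 / (5 * X + 2)))
        * (-1 + 3 / (X + 1))))
    (hΨ₂ : Ψ₂ = (1 / (4 * X + 3)) *
      ((1 - 4 / (X + 1) + 6 / (X + 1) ^ 2) * (-4 + 6 / (X + 1))))
    (hZ : Z = (Ψ₀ + Ψ₁ + Ψ₂) / (10 * X + 5)) :
    Ψ₀.denom.eval (-1/2) ≠ 0 ∧ Ψ₁.denom.eval (-1/2) ≠ 0 ∧ Ψ₂.denom.eval (-1/2) ≠ 0 ∧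
      RatFunc.eval (RingHom.id ℚ) (-1/2) Ψ₀ = -56 ∧
      RatFunc.eval (RingHom.id ℚ) (-1/2) Ψ₁ = -80 ∧
      RatFunc.eval (RingHom.id ℚ) (-1/2) Ψ₂ = 136 ∧
      RatFunc.eval (RingHom.id ℚ) (-1/2) Ψ₀ + RatFunc.eval (RingHom.id ℚ) (-1/2) Ψ₁ +
        RatFunc.eval (RingHom.id ℚ) (-1/2) Ψ₂ = 0 ∧
      0 ≤ orderAt Z (-1/2) := by
  have hne : ∀ p : ℚ[X], p.eval 0 ≠ 0 → algebraMap ℚ[X] (RatFunc ℚ) p ≠ 0 := fun p hp =>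
    RatFunc.algebraMap_ne_zero (fun h0 => hp (by simp [h0]))
  have h1 : (X + 1 : RatFunc ℚ) ≠ 0 := by
    have := hne (Polynomial.X + 1) (by norm_num)
    rwa [map_add, map_one, RatFunc.algebraMap_X] at this
  have h2 : (5 * X + 2 : RatFunc ℚ) ≠ 0 := by
    have := hne (5 * Polynomial.X + 2) (by norm_num)
    rwa [map_add, map_mul, map_ofNat, map_ofNat, RatFunc.algebraMap_X] at this
  have h3 : (7 * X + 3 : RatFunc ℚ) ≠ 0 := by
    have := hne (7 * Polynomial.X + 3) (by norm_num)
    rwa [map_add, map_mul, map_ofNat, map_ofNat, RatFunc.algebraMap_X] at this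
  have h4 : (4 * X + 3 : RatFunc ℚ) ≠ 0 := by
    have := hne (4 * Polynomial.X + 3) (by norm_num)
    rwa [map_add, map_mul, map_ofNat, map_ofNat, RatFunc.algebraMap_X] at this
  have hQ0 : (((Polynomial.X + 1) ^ 4 * (5 * Polynomial.X + 2)) : ℚ[X]) ≠ 0 := by
    intro h0; have := congrArg (Polynomial.eval 0) h0; norm_num at this
  have hQ1 : (((7 * Polynomial.X + 3) * (Polynomial.X + 1) ^ 3 * (5 * Polynomial.X + 2)) : ℚ[X]) ≠ 0 := by
    intro h0; have := congrArg (Polynomial.eval 0) h0; norm_num at this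
  have hQ2 : (((4 * Polynomial.X + 3) * (Polynomial.X + 1) ^ 3) : ℚ[X]) ≠ 0 := by
    intro h0; have := congrArg (Polynomial.eval 0) h0; norm_num at this
  have e0 : Ψ₀ = algebraMap ℚ[X] (RatFunc ℚ) (20 * Polynomial.X ^ 5 - 20 * Polynomial.X ^ 4 + 17 * Polynomial.X ^ 3 + 5 * Polynomial.X ^ 2 - 5 * Polynomial.X + 2) / algebraMap ℚ[X] (RatFunc ℚ) ((Polynomial.X + 1) ^ 4 * (5 * Polynomial.X + 2)) := by
    rw [hΨ₀]
    rw [eq_div_iff (RatFunc.algebraMap_ne_zero hQ0)]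
    simp only [map_add, map_sub, map_mul, map_pow, map_ofNat, map_one, map_neg,
      RatFunc.algebraMap_X]
    have h2' : (X * 5 + 2 : RatFunc ℚ) ≠ 0 := by rwa [mul_comm]
    field_simp [h1, h2']
    ring
  have e1 : Ψ₁ = algebraMap ℚ[X] (RatFunc ℚ) (-20 * Polynomial.X ^ 4 + 60 * Polynomial.X ^ 3 - 39 * Polynomial.X ^ 2 - 8 * Polynomial.X + 12) / algebraMap ℚ[X] (RatFunc ℚ) ((7 * Polynomial.X + 3) * (Polynomial.X + 1) ^ 3 * (5 * Polynomial.X + 2)) := by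
    rw [hΨ₁]
    rw [eq_div_iff (RatFunc.algebraMap_ne_zero hQ1)]
    simp only [map_add, map_sub, map_mul, map_pow, map_ofNat, map_one, map_neg,
      RatFunc.algebraMap_X]
    have h2' : (X * 5 + 2 : RatFunc ℚ) ≠ 0 := by rwa [mul_comm]
    field_simp
    ring
  have e2 : Ψ₂ = algebraMap ℚ[X] (RatFunc ℚ) (-4 * Polynomial.X ^ 3 + 10 * Polynomial.X ^ 2 - 16 * Polynomial.X + 6) / algebraMap ℚ[X] (RatFunc ℚ) ((4 * Polynomial.X + 3) * (Polynomial.X + 1) ^ 3) := by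
    rw [hΨ₂]
    rw [eq_div_iff (RatFunc.algebraMap_ne_zero hQ2)]
    simp only [map_add, map_sub, map_mul, map_pow, map_ofNat, map_one, map_neg,
      RatFunc.algebraMap_X]
    field_simp
    ring
  have h10 : algebraMap ℚ[X] (RatFunc ℚ) (10 * Polynomial.X + 5) = 10 * X + 5 := by
    simp only [map_add, map_mul, map_ofNat, RatFunc.algebraMap_X]
  have eZ0 : Z = algebraMap ℚ[X] (RatFunc ℚ) (((20 * Polynomial.X ^ 5 - 20 * Polynomial.X ^ 4 + 17 * Polynomial.X ^ 3 + 5 * Polynomial.X ^ 2 - 5 * Polynomial.X + 2) * ((7 * Polynomial.X + 3) * (Polynomial.X + 1) ^ 3 * (5 * Polynomial.X + 2)) + ((Polynomial.X + 1) ^ 4 * (5 * Polynomial.X + 2)) * (-20 * Polynomial.X ^ 4 + 60 * Polynomial.X ^ 3 - 39 * Polynomial.X ^ 2 - 8 * Polynomial.X + 12)) * ((4 * Polynomial.X + 3) * (Polynomial.X + 1) ^ 3) + ((Polynomial.X + 1) ^ 4 * (5 * Polynomial.X + 2)) * ((7 * Polynomial.X + 3) * (Polynomial.X + 1) ^ 3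 * (5 * Polynomial.X + 2)) * (-4 * Polynomial.X ^ 3 + 10 * Polynomial.X ^ 2 - 16 * Polynomial.X + 6)) /
      algebraMap ℚ[X] (RatFunc ℚ) (((Polynomial.X + 1) ^ 4 * (5 * Polynomial.X + 2)) * ((7 * Polynomial.X + 3) * (Polynomial.X + 1) ^ 3 * (5 * Polynomial.X + 2)) * ((4 * Polynomial.X + 3) * (Polynomial.X + 1) ^ 3) * (10 * Polynomial.X + 5)) := by
    rw [hZ, e0, e1, e2, map_div_add_div _ _ _ _ hQ0 hQ1,
      map_div_add_div _ _ _ _ (mul_ne_zero hQ0 hQ1) hQ2, ← h10, map_div_div]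
  have eZ : Z = algebraMap ℚ[X] (RatFunc ℚ) (280 * Polynomial.X ^ 6 - 200 * Polynomial.X ^ 5 + 195 * Polynomial.X ^ 4 + 235 * Polynomial.X ^ 3 - 335 * Polynomial.X ^ 2 + 15 * Polynomial.X + 90) /
      algebraMap ℚ[X] (RatFunc ℚ) (5 * (((Polynomial.X + 1) ^ 4 * (5 * Polynomial.X + 2)) * (7 * Polynomial.X + 3) * (4 * Polynomial.X + 3))) := by
    rw [eZ0, div_eq_div_iff (RatFunc.algebraMap_ne_zero (by
        intro h0; have := congrArg (Polynomial.eval 0) h0; norm_num at this))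
      (RatFunc.algebraMap_ne_zero (by
        intro h0; have := congrArg (Polynomial.eval 0) h0; norm_num at this)),
      ← map_mul, ← map_mul]
    exact congrArg _ (by ring)
  obtain ⟨d0, v0⟩ := ratfunc_key Ψ₀ _ _ (-1/2) (by norm_num) e0
  obtain ⟨d1, v1⟩ := ratfunc_key Ψ₁ _ _ (-1/2) (by norm_num) e1
  obtain ⟨d2, v2⟩ := ratfunc_key Ψ₂ _ _ (-1/2) (by norm_num) e2
  obtain ⟨dZ, -⟩ := ratfunc_key Z _ _ (-1/2) (by norm_num) eZ
  have hord : 0 ≤ orderAt Z (-1/2) := by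
    have hm : rootMultiplicity (-1/2 : ℚ) Z.denom = 0 :=
      Polynomial.rootMultiplicity_eq_zero dZ
    unfold orderAt
    rw [hm]
    simp
  replace v0 : RatFunc.eval (RingHom.id ℚ) (-1/2) Ψ₀ = -56 := by rw [v0]; norm_num
  replace v1 : RatFunc.eval (RingHom.id ℚ) (-1/2) Ψ₁ = -80 := by rw [v1]; norm_num
  replace v2 : RatFunc.eval (RingHom.id ℚ) (-1/2) Ψ₂ = 136 := by rw [v2]; norm_num
  exact ⟨d0, d1, d2, v0, v1, v2, by rw [v0, v1, v2]; norm_num, hord⟩
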